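/- Let S be a string, let ℓ ≥ 1 and i ≥ 2 be integers, and for each t let B_{ℓ,t} denote the block S[ℓ(t−1)+1, ℓt]. Suppose S[x, x+2h−1] is a square (i.e., S[x+k] = S[x+h+k] for all 0 ≤ k < h) with x + 2h − 1 ≤ |S|, half-length h satisfying 2ℓ ≤ h < 3ℓ, and starting position x satisfying ℓ(i−2)+2 ≤ x ≤ ℓ(i−1)+1. Then: (a) the block B_{ℓ,i} lies entirely inside the left half of the square, i.e., x ≤ ℓ(i−1)+1 and ℓ·i ≤ x + h − 1; (b) S[ℓ(i−1)+1+h, ℓi+h] = B_{ℓ,i}; (c) this copy lies inside the blocks B_{ℓ,i+2} and B_{ℓ,i+3}, i.e., ℓ(i+1)+1 ≤ ℓ(i−1)+1+h and ℓi + h ≤ ℓ(i+3). -/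
import Mathlib

/-- **A square of the given range contains a shifted copy of the block `B_{ℓ,i}`.**
`S` is a string of length `n`, modeled as a function `ℕ → Alph` on 1-indexed
positions.  For `t ≥ 1`, the block `B_{ℓ,t}` is `S[ℓ(t−1)+1, ℓt]`.
Suppose `S[x, x+2h−1]` is a square (`S (x+k) = S (x+h+k)` for all `k < h`)
with `2ℓ ≤ h < 3ℓ` and `ℓ(i−2)+2 ≤ x ≤ ℓ(i−1)+1` (where `i ≥ 2`).  Then
(a) the block `B_{ℓ,i}` lies inside the left half of the square,
(b) `S[ℓ(i−1)+1+h, ℓi+h] = B_{ℓ,i}`, and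
(c) this copy lies inside the blocks `B_{ℓ,i+2}` and `B_{ℓ,i+3}`. -/
theorem square_contains_block_copy {Alph : Type*} (S : ℕ → Alph)
    (n ℓ i x h : ℕ) (hℓ : 1 ≤ ℓ) (hi : 2 ≤ i)
    (hsq : ∀ k < h, S (x + k) = S (x + h + k))
    (hn : x + 2 * h - 1 ≤ n)
    (hh1 : 2 * ℓ ≤ h) (hh2 : h < 3 * ℓ)
    (hx1 : ℓ * (i - 2) + 2 ≤ x) (hx2 : x ≤ ℓ * (i - 1) + 1) :
    -- (a)
    (x ≤ ℓ * (i - 1) + 1 ∧ ℓ * i ≤ x + h - 1) ∧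
    -- (b)
    (∀ t < ℓ, S (ℓ * (i - 1) + 1 + h + t) = S (ℓ * (i - 1) + 1 + t)) ∧
    -- (c)
    (ℓ * (i + 1) + 1 ≤ ℓ * (i - 1) + 1 + h ∧ ℓ * i + h ≤ ℓ * (i + 3)) := by
  have e1 : ℓ * (i - 1) = ℓ * (i - 2) + ℓ := by
    have : i - 1 = (i - 2) + 1 := by omega
    rw [this, Nat.mul_succ]
  have e2 : ℓ * i = ℓ * (i - 2) + 2 * ℓ := by
    have h' : i = (i - 2) + 2 := by omega
    conv_lhs => rw [h']
    rw [Nat.mul_add]; ring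
  have e3 : ℓ * (i + 1) = ℓ * (i - 2) + 3 * ℓ := by
    have h' : i + 1 = (i - 2) + 3 := by omega
    rw [h', Nat.mul_add]; ring
  have e4 : ℓ * (i + 3) = ℓ * (i - 2) + 5 * ℓ := by
    have h' : i + 3 = (i - 2) + 5 := by omega
    rw [h', Nat.mul_add]; ring
  refine ⟨⟨hx2, by omega⟩, ?_, by omega⟩
  intro t ht
  set k := ℓ * (i - 1) + 1 + t - x with hk
  have hklt : k < h := by omega
  have h1 : x + k = ℓ * (i - 1) + 1 + t := by omega
  have h2 : x + h + k = ℓ * (i - 1) + 1 + h + t := by omega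
  have := hsq k hklt
  rw [h1, h2] at this
  exact this.symm
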